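/- arXiv:2509.03967 — 3 statements merged into one kernel-verified Lean document; each statement's English description precedes it below -/
import Mathlib

section
/- Let G be a block graph in which every block has at least three vertices, let B be a block of G of size η that shares exactly one vertex v with the other blocks of G. Then there is no zero forcing set S of G such that S contains exactly η − 2 vertices of B and v ∈ S. -/
namespace ZqForcing

variable {V : Type*}

/-- `u` forces `v` within the allowed vertex set `A`, given the filled set `F`:
`u` is filled, `v` is its unique unfilled neighbor inside `A`. -/
def forceIn (G : SimpleGraph V) (A F : Set V) (u v : V) : Prop :=
  u ∈ A ∧ v ∈ A ∧ u ∈ F ∧ v ∉ F ∧ G.Adj u v ∧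
    ∀ w ∈ A, G.Adj u w → w ∉ F → w = v

/-- One step of the standard zero forcing color change rule. -/
def zfStep (G : SimpleGraph V) (F F' : Set V) : Prop :=
  ∃ u v, forceIn G Set.univ F u v ∧ F' = insert v F

/-- `S` is a zero forcing set: repeated color changes fill all of `V`. -/
def IsZeroForcingSet (G : SimpleGraph V) (S : Set V) : Prop :=
  Relation.ReflTransGen (zfStep G) S Set.univ

/-- The zero forcing number `Z(G)`. -/
noncomputable def zeroForcingNumber (G : SimpleGraph V) : ℕ :=
  sInf {n | ∃ S : Set V, S.ncard = n ∧ IsZeroForcingSet G S}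

/-- Reachability in `G - F`, i.e. through vertices avoiding `F`. -/
def reachAvoid (G : SimpleGraph V) (F : Set V) : V → V → Prop :=
  Relation.ReflTransGen (fun a b => G.Adj a b ∧ a ∉ F ∧ b ∉ F)

/-- The positive semidefinite color change rule: filled `u` forces unfilled `v` when `v`
is the unique neighbor of `u` in the connected component of `G - F` containing `v`. -/
def psdForce (G : SimpleGraph V) (F : Set V) (u v : V) : Prop :=
  u ∈ F ∧ v ∉ F ∧ G.Adj u v ∧
    ∀ w, G.Adj u w → w ∉ F → reachAvoid G F v w → w = v

/-- One step of the positive semidefinite color change rule. -/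
def psdStep (G : SimpleGraph V) (F F' : Set V) : Prop :=
  ∃ u v, psdForce G F u v ∧ F' = insert v F

/-- `S` is a positive semidefinite zero forcing set. -/
def IsPSDForcingSet (G : SimpleGraph V) (S : Set V) : Prop :=
  Relation.ReflTransGen (psdStep G) S Set.univ

/-- The positive semidefinite zero forcing number `Z₊(G)`. -/
noncomputable def psdZeroForcingNumber (G : SimpleGraph V) : ℕ :=
  sInf {n | ∃ S : Set V, S.ncard = n ∧ IsPSDForcingSet G S}

/-- The vertex sets of the connected components of the subgraph induced on
the unfilled vertices. -/
def unfilledComponents (G : SimpleGraph V) (F : Set V) : Set (Set V) :=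
  {C | ∃ v, v ∉ F ∧ C = {w | reachAvoid G F v w}}

/-- A forcing step performed inside the induced subgraph on the vertex set `A`. -/
def rule3Step (G : SimpleGraph V) (A F F' : Set V) : Prop :=
  ∃ u v, forceIn G A F u v ∧ F' = insert v F

/-- `ZqWinFrom G q F t`: starting from the filled set `F`, the player can guarantee to
fill all vertices using at most `t` further tokens against every oracle strategy, in the
`q`-analogue zero forcing game. -/
inductive ZqWinFrom (G : SimpleGraph V) (q : ℕ) : Set V → ℕ → Prop
  | done (t : ℕ) : ZqWinFrom G q Set.univ t
  | rule1 {F : Set V} {t : ℕ} (v : V) (hv : v ∉ F)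
      (h : ZqWinFrom G q (insert v F) t) : ZqWinFrom G q F (t + 1)
  | rule2 {F : Set V} {t : ℕ} (u v : V) (huv : forceIn G Set.univ F u v)
      (h : ZqWinFrom G q (insert v F) t) : ZqWinFrom G q F t
  | rule3 {F : Set V} {t : ℕ} (𝒞 : Set (Set V))
      (h𝒞 : 𝒞 ⊆ unfilledComponents G F) (hcard : q + 1 ≤ 𝒞.ncard)
      (next : ∀ 𝒮 : Set (Set V), 𝒮 ⊆ 𝒞 → 𝒮.Nonempty → Set V)
      (hnext : ∀ (𝒮 : Set (Set V)) (h1 : 𝒮 ⊆ 𝒞) (h2 : 𝒮.Nonempty),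
        Relation.ReflTransGen (rule3Step G (F ∪ ⋃₀ 𝒮)) F (next 𝒮 h1 h2))
      (h : ∀ (𝒮 : Set (Set V)) (h1 : 𝒮 ⊆ 𝒞) (h2 : 𝒮.Nonempty),
        ZqWinFrom G q (next 𝒮 h1 h2) t) :
      ZqWinFrom G q F t

/-- The `q`-analogue zero forcing number `Z_q(G)`. -/
noncomputable def qZeroForcingNumber (G : SimpleGraph V) (q : ℕ) : ℕ :=
  sInf {t | ZqWinFrom G q ∅ t}

/-- The induced subgraph on `B` is connected and has no cut vertex. -/
def NoCutVertex (G : SimpleGraph V) (B : Set V) : Prop :=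
  (G.induce B).Connected ∧
    ∀ v ∈ B, (B \ {v}).Nonempty → (G.induce (B \ {v})).Connected

/-- `B` is a block of `G`: a maximal (vertex set of a) connected subgraph without
a cut vertex. -/
def IsBlock (G : SimpleGraph V) (B : Set V) : Prop :=
  NoCutVertex G B ∧ ∀ B' : Set V, B ⊆ B' → NoCutVertex G B' → B' = B

/-- A block graph: a connected graph each of whose blocks is a clique. -/
def IsBlockGraph (G : SimpleGraph V) : Prop :=
  G.Connected ∧ ∀ B : Set V, IsBlock G B → G.IsClique B

/-- A cactus graph: connected, and every edge lies on at most one cycle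
(cycles being identified when they have the same edge set). -/
def IsCactus (G : SimpleGraph V) : Prop :=
  G.Connected ∧ ∀ (a b : V) (c : G.Walk a a) (d : G.Walk b b),
    c.IsCycle → d.IsCycle → ∀ e ∈ c.edges, e ∈ d.edges →
      ∀ e', e' ∈ c.edges ↔ e' ∈ d.edges

/-- `c` is an induced (chordless) cycle of `G`. -/
def IsInducedCycle (G : SimpleGraph V) {v : V} (c : G.Walk v v) : Prop :=
  c.IsCycle ∧ ∀ x ∈ c.support, ∀ y ∈ c.support, G.Adj x y → s(x, y) ∈ c.edges

/-- Generalized windmill graph of Type I: η disjoint copies of `K_k` together with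
`l` central vertices forming a clique, each central vertex adjacent to everything. -/
def windmillI (η k l : ℕ) : SimpleGraph ((Fin η × Fin k) ⊕ Fin l) :=
  SimpleGraph.fromRel (fun a b =>
    match a, b with
    | Sum.inl (i, _), Sum.inl (i', _) => i = i'
    | Sum.inr _, Sum.inr _ => True
    | _, _ => True)

/-- Generalized windmill graph of Type II: η disjoint copies of `K_k` together with
`l` pairwise nonadjacent central vertices, each adjacent to every clique vertex. -/
def windmillII (η k l : ℕ) : SimpleGraph ((Fin η × Fin k) ⊕ Fin l) :=
  SimpleGraph.fromRel (fun a b =>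
    match a, b with
    | Sum.inl (i, _), Sum.inl (i', _) => i = i'
    | Sum.inr _, Sum.inr _ => False
    | _, _ => True)

/-- Generalized star (spider) graph: a center `none` together with `k` disjoint paths,
the `i`-th of length `m i`, attached to the center at one endpoint. -/
def spider {k : ℕ} (m : Fin k → ℕ) : SimpleGraph (Option (Σ i : Fin k, Fin (m i))) :=
  SimpleGraph.fromRel (fun a b =>
    match a, b with
    | none, some ⟨_, j⟩ => j.val = 0
    | some ⟨i, j⟩, some ⟨i', j'⟩ => i = i' ∧ j.val + 1 = j'.val
    | _, _ => False)



private lemma connected_of_subsingleton (G : SimpleGraph V) {A : Set V}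
    (h : A.Subsingleton) (hne : A.Nonempty) : (G.induce A).Connected := by
  rw [SimpleGraph.connected_iff]
  refine ⟨fun x y => ?_, ⟨⟨hne.choose, hne.choose_spec⟩⟩⟩
  have : x = y := Subtype.ext (h x.2 y.2)
  exact this ▸ SimpleGraph.Reachable.refl _

private lemma pair_noCutVertex (G : SimpleGraph V) {a b : V} (hab : G.Adj a b) :
    NoCutVertex G ({a, b} : Set V) := by
  constructor
  · rw [SimpleGraph.connected_iff]
    refine ⟨fun x y => ?_, ⟨⟨a, Or.inl rfl⟩⟩⟩
    have hadj : ∀ (z w : ({a, b} : Set V)), z.val = a → w.val = b →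
        (G.induce {a, b}).Reachable z w := by
      intro z w hz hw
      exact SimpleGraph.Adj.reachable (by simp [hz, hw, hab])
    rcases x.2 with hx | hx <;> rcases y.2 with hy | hy
    · exact (Subtype.ext (hx.trans hy.symm)) ▸ SimpleGraph.Reachable.refl _
    · exact hadj x y hx hy
    · exact (hadj y x hy hx).symm
    · exact (Subtype.ext (hx.trans hy.symm)) ▸ SimpleGraph.Reachable.refl _
  · intro u hu hne
    refine connected_of_subsingleton G ?_ hne
    intro z hz w hw
    rcases hu with rfl | rfl
    · rcases hz.1 with h | h
      · exact absurd h hz.2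
      · rcases hw.1 with h' | h'
        · exact absurd h' hw.2
        · exact h.trans h'.symm
    · rcases hz.1 with h | h
      · rcases hw.1 with h' | h'
        · exact h.trans h'.symm
        · exact absurd h' hw.2
      · exact absurd h hz.2

private lemma exists_block_superset [Finite V] (G : SimpleGraph V) {P : Set V}
    (hP : NoCutVertex G P) : ∃ B : Set V, IsBlock G B ∧ P ⊆ B := by
  set 𝒜 : Set (Set V) := {B' | P ⊆ B' ∧ NoCutVertex G B'} with h𝒜
  have hfin : 𝒜.Finite := Set.toFinite _
  have hne : 𝒜.Nonempty := ⟨P, subset_rfl, hP⟩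
  obtain ⟨B, hB, hmax⟩ := hfin.exists_maximalFor id 𝒜 hne
  refine ⟨B, ⟨hB.2, fun B' hsub hB' => ?_⟩, hB.1⟩
  exact le_antisymm (hmax ⟨hB.1.trans hsub, hB'⟩ hsub) hsub

private lemma edge_in_block [Finite V] (G : SimpleGraph V) {a b : V} (hab : G.Adj a b) :
    ∃ B : Set V, IsBlock G B ∧ a ∈ B ∧ b ∈ B := by
  obtain ⟨B, hB, hsub⟩ := exists_block_superset G (pair_noCutVertex G hab)
  exact ⟨B, hB, hsub (Or.inl rfl), hsub (Or.inr rfl)⟩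

/-- in a block graph all of whose blocks have at least three vertices,
if `B` is a block of size `η` sharing exactly one vertex `v` with the other blocks,
then no zero forcing set `S` contains exactly `η - 2` vertices of `B` with `v ∈ S`. -/
theorem stmt2 {V : Type*} [Fintype V] (G : SimpleGraph V)
    (hG : IsBlockGraph G) (hbig : ∀ B : Set V, IsBlock G B → 3 ≤ B.ncard)
    (B : Set V) (hB : IsBlock G B) (η : ℕ) (hη : B.ncard = η)
    (v : V) (hv : v ∈ B)
    (hshared : ∀ w ∈ B, ((∃ B' : Set V, IsBlock G B' ∧ B' ≠ B ∧ w ∈ B') ↔ w = v))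
    (S : Set V) (hcard : (S ∩ B).ncard = η - 2) (hvS : v ∈ S) :
    ¬ IsZeroForcingSet G S := by
  intro hZF
  have hclique : G.IsClique B := hG.2 B hB
  have hη3 : 3 ≤ η := hη ▸ hbig B hB
  have hsum : (B ∩ S).ncard + (B \ S).ncard = B.ncard :=
    Set.ncard_inter_add_ncard_diff_eq_ncard B S (Set.toFinite B)
  rw [Set.inter_comm] at hsum
  have hBS : (B \ S).ncard = 2 := by omega
  obtain ⟨x, y, hxy, hset⟩ := Set.ncard_eq_two.mp hBS
  have hxBS : x ∈ B \ S := hset ▸ Or.inl rfl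
  have hyBS : y ∈ B \ S := hset ▸ Or.inr rfl
  have hxB : x ∈ B := hxBS.1
  have hyB : y ∈ B := hyBS.1
  have hxv : x ≠ v := fun h => hxBS.2 (h ▸ hvS)
  have hyv : y ≠ v := fun h => hyBS.2 (h ▸ hvS)
  have memB : ∀ z ∈ B, z ≠ v → ∀ u, G.Adj u z → u ∈ B := by
    intro z hzB hzv u hadj
    obtain ⟨Bl, hBl, huBl, hzBl⟩ := edge_in_block G hadj
    by_cases h : Bl = B
    · exact h ▸ huBl
    · exact absurd ((hshared z hzB).mp ⟨Bl, hBl, h, hzBl⟩) hzv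
  have inv : ∀ F, Relation.ReflTransGen (zfStep G) S F → x ∉ F ∧ y ∉ F := by
    intro F h
    induction h with
    | refl => exact ⟨hxBS.2, hyBS.2⟩
    | @tail F₁ F₂ _ hstep ih =>
      obtain ⟨u, w, ⟨-, -, huF, hwF, hadj, huniq⟩, rfl⟩ := hstep
      constructor
      · rintro (rfl | hxF)
        · have huB : u ∈ B := memB x hxB hxv u hadj
          have huy : u ≠ y := fun h => ih.2 (h ▸ huF)
          exact hxy ((huniq y (Set.mem_univ y) (hclique huB hyB huy) ih.2).symm)
        · exact ih.1 hxF
      · rintro (rfl | hyF)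
        · have huB : u ∈ B := memB y hyB hyv u hadj
          have hux : u ≠ x := fun h => ih.1 (h ▸ huF)
          exact hxy (huniq x (Set.mem_univ x) (hclique huB hxB hux) ih.1)
        · exact ih.2 hyF
  exact (inv Set.univ hZF).1 (Set.mem_univ x)


end ZqForcing
end

section
/- Let G be a block graph in which every block has more than two vertices. Then for every integer q ≥ 0, Z_q(G) = Z(G). -/
namespace ZqForcing

variable {V : Type*}

/-! ### Auxiliary lemmas -/

section Aux

open Relation SimpleGraph

variable {G : SimpleGraph V} {F X Y A B B₁ B₂ S : Set V} {u v w a b d x y z : V}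

lemma reachAvoid_mono {F' : Set V} (hFF : F' ⊆ F) (h : reachAvoid G F a b) :
    reachAvoid G F' a b := by
  induction h with
  | refl => exact ReflTransGen.refl
  | tail _ hstep ih =>
    exact ih.tail ⟨hstep.1, fun hm => hstep.2.1 (hFF hm), fun hm => hstep.2.2 (hFF hm)⟩

lemma reachAvoid_symm (h : reachAvoid G F a b) : reachAvoid G F b a := by
  induction h with
  | refl => exact ReflTransGen.refl
  | tail _ hstep ih => exact ReflTransGen.head ⟨hstep.1.symm, hstep.2.2, hstep.2.1⟩ ih

lemma reachAvoid_notMem (h : reachAvoid G F a b) (ha : a ∉ F) : b ∉ F := by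
  induction h with
  | refl => exact ha
  | tail _ hstep _ => exact hstep.2.2

/-- The connected component of `G - X` containing `d`. -/
def compOf (G : SimpleGraph V) (X : Set V) (d : V) : Set V := {w | reachAvoid G X d w}

lemma mem_compOf : a ∈ compOf G X d ↔ reachAvoid G X d a := Iff.rfl

lemma compOf_closed (ha : a ∈ compOf G X d) (h : reachAvoid G X a w) : w ∈ compOf G X d :=
  Relation.ReflTransGen.trans ha h

lemma compOf_notMem (hd : d ∉ X) (ha : a ∈ compOf G X d) : a ∉ X :=
  reachAvoid_notMem ha hd

lemma self_mem_compOf : d ∈ compOf G X d := ReflTransGen.refl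

lemma compOf_mem_unfilledComponents (hd : d ∉ X) :
    compOf G X d ∈ unfilledComponents G X := ⟨d, hd, rfl⟩

lemma reachAvoid_exists_walk (h : reachAvoid G F a b) (ha : a ∉ F) :
    ∃ p : G.Walk a b, ∀ z ∈ p.support, z ∉ F := by
  induction h with
  | refl => exact ⟨SimpleGraph.Walk.nil, by simpa using ha⟩
  | tail _ hstep ih =>
    obtain ⟨p, hp⟩ := ih
    refine ⟨p.concat hstep.1, ?_⟩
    intro z hz
    rw [SimpleGraph.Walk.support_concat] at hz
    simp only [List.concat_eq_append, List.mem_append, List.mem_singleton] at hz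
    rcases hz with hz | rfl
    · exact hp z hz
    · exact hstep.2.2

lemma induce_reachable_of_walk {A : Set V} : ∀ {a b : V} (p : G.Walk a b),
    (∀ z ∈ p.support, z ∈ A) → ∀ (ha : a ∈ A) (hb : b ∈ A),
    (G.induce A).Reachable ⟨a, ha⟩ ⟨b, hb⟩ := by
  intro a b p
  induction p with
  | nil => intro _ _ _; exact ⟨SimpleGraph.Walk.nil⟩
  | @cons u' v' w' h p ih =>
    intro hp ha hb
    have hv' : v' ∈ A := hp v' (by simp)
    have hadj : (G.induce A).Adj ⟨u', ha⟩ ⟨v', hv'⟩ := by simpa using h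
    exact hadj.reachable.trans (ih (fun z hz => hp z (by simp [hz])) hv' hb)

lemma connected_of_hub {A : Set V} {c : V} (hc : c ∈ A)
    (h : ∀ t, (ht : t ∈ A) → (G.induce A).Reachable ⟨t, ht⟩ ⟨c, hc⟩) :
    (G.induce A).Connected := by
  rw [connected_iff]
  refine ⟨fun x y => ?_, ⟨⟨c, hc⟩⟩⟩
  exact (h x.1 x.2).trans (h y.1 y.2).symm

lemma isClique_induce_connected (hA : G.IsClique A) (hne : A.Nonempty) :
    (G.induce A).Connected := by
  obtain ⟨c, hc⟩ := hne
  refine connected_of_hub hc fun t ht => ?_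
  rcases eq_or_ne t c with rfl | hne'
  · exact ⟨SimpleGraph.Walk.nil⟩
  · exact SimpleGraph.Adj.reachable (by simpa using hA ht hc hne')

lemma isClique_noCutVertex (hA : G.IsClique A) (hne : A.Nonempty) : NoCutVertex G A :=
  ⟨isClique_induce_connected hA hne,
   fun _ _ hne' => isClique_induce_connected (hA.subset Set.diff_subset) hne'⟩

lemma exists_block [Fintype V] (h : NoCutVertex G A) : ∃ B, A ⊆ B ∧ IsBlock G B := by
  obtain ⟨B, hB, hmax⟩ := Set.Finite.exists_maximalFor (id : Set V → Set V)
    {B : Set V | A ⊆ B ∧ NoCutVertex G B} (Set.toFinite _) ⟨A, subset_rfl, h⟩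
  exact ⟨B, hB.1, hB.2, fun B' hBB' hB' => Set.Subset.antisymm (hmax ⟨hB.1.trans hBB', hB'⟩ hBB') hBB'⟩

lemma block_eq_block (hG : IsBlockGraph G) (h1 : IsBlock G B₁) (h2 : IsBlock G B₂)
    {p q : V} (hpq : p ≠ q) (hp1 : p ∈ B₁) (hq1 : q ∈ B₁) (hp2 : p ∈ B₂) (hq2 : q ∈ B₂) :
    B₁ = B₂ := by
  have hc1 : G.IsClique B₁ := hG.2 _ h1
  have hc2 : G.IsClique B₂ := hG.2 _ h2
  have key : ∀ (A : Set V), A ⊆ B₁ ∪ B₂ → ∀ s, s ∈ A → s ∈ B₁ → s ∈ B₂ →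
      (G.induce A).Connected := by
    intro A hAsub s hsA hs1 hs2
    refine connected_of_hub hsA fun t ht => ?_
    rcases eq_or_ne t s with rfl | hts
    · exact ⟨SimpleGraph.Walk.nil⟩
    · refine SimpleGraph.Adj.reachable ?_
      have : G.Adj t s := by
        rcases hAsub ht with h | h
        · exact hc1 h hs1 hts
        · exact hc2 h hs2 hts
      simpa using this
  have hU : NoCutVertex G (B₁ ∪ B₂) := by
    constructor
    · exact key _ subset_rfl p (Or.inl hp1) hp1 hp2
    · intro r _ _
      rcases eq_or_ne p r with rfl | hpr
      · exact key _ Set.diff_subset q ⟨Or.inl hq1, by simpa using hpq.symm⟩ hq1 hq2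
      · exact key _ Set.diff_subset p ⟨Or.inl hp1, by simpa using hpr⟩ hp1 hp2
  have e1 := h1.2 _ Set.subset_union_left hU
  have e2 := h2.2 _ Set.subset_union_right hU
  exact e1.symm.trans e2

/-- In a block graph, if `u` is adjacent to both endpoints of a walk avoiding `u`, then
the endpoints are adjacent (they lie in a common block). -/
lemma adj_of_avoid_walk [Fintype V] (hG : IsBlockGraph G)
    (hux : G.Adj u x) (huy : G.Adj u y) (hxy : x ≠ y)
    (p : G.Walk x y) (hup : u ∉ p.support) : G.Adj x y := by
  classical
  set q := p.bypass with hqdef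
  have hq : q.IsPath := p.bypass_isPath
  have hqsub : ∀ z ∈ q.support, z ∈ p.support := fun z hz => p.support_bypass_subset hz
  have huq : u ∉ q.support := fun h => hup (hqsub _ h)
  set S : Set V := insert u {z | z ∈ q.support} with hSdef
  have hsupS : ∀ z ∈ q.support, z ∈ S := fun z hz => Set.mem_insert_iff.mpr (Or.inr hz)
  have hsupne : ∀ z ∈ q.support, z ≠ u := fun z hz h => huq (h ▸ hz)
  have hxS : x ∈ S := hsupS _ q.start_mem_support
  have hyS : y ∈ S := hsupS _ q.end_mem_support
  have huS : u ∈ S := Set.mem_insert _ _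
  have hconn : (G.induce S).Connected := by
    refine connected_of_hub (c := u) huS fun t ht => ?_
    rcases Set.mem_insert_iff.mp ht with rfl | htq
    · exact ⟨SimpleGraph.Walk.nil⟩
    · have h1 : (G.induce S).Reachable ⟨x, hxS⟩ ⟨t, ht⟩ :=
        induce_reachable_of_walk (q.takeUntil t htq)
          (fun z hz => hsupS z (q.support_takeUntil_subset htq hz)) hxS ht
      have hadj : (G.induce S).Adj ⟨x, hxS⟩ ⟨u, huS⟩ := by simpa using hux.symm
      exact h1.symm.trans hadj.reachable
  have hdel : ∀ r ∈ S, (S \ {r}).Nonempty → (G.induce (S \ {r})).Connected := by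
    intro r hrS _
    rcases Set.mem_insert_iff.mp hrS with hru' | hrq
    · -- r = u ; hub x
      have hxu : x ≠ r := fun h => (hsupne _ q.start_mem_support) (h.trans hru')
      refine connected_of_hub (c := x) ⟨hxS, by simpa using hxu⟩ fun t ht => ?_
      have htq : t ∈ q.support := by
        rcases Set.mem_insert_iff.mp ht.1 with htu | htq
        · exact absurd (htu.trans hru'.symm) (by simpa using ht.2)
        · exact htq
      have hmemT : ∀ z ∈ (q.takeUntil t htq).support, z ∈ S \ {r} := fun z hz =>
        ⟨hsupS z (q.support_takeUntil_subset htq hz),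
          by simpa using fun h : z = r =>
            (hsupne z (q.support_takeUntil_subset htq hz)) (h.trans hru')⟩
      have hxA : x ∈ S \ {r} := ⟨hxS, by simpa using hxu⟩
      exact (induce_reachable_of_walk (q.takeUntil t htq) hmemT hxA ht).symm
    · -- r ∈ q.support ; hub u
      have hru : r ≠ u := fun h => huq (h ▸ hrq)
      have huA : u ∈ S \ {r} := ⟨huS, by simpa using hru.symm⟩
      refine connected_of_hub (c := u) huA fun t ht => ?_
      rcases Set.mem_insert_iff.mp ht.1 with rfl | htq
      · exact ⟨SimpleGraph.Walk.nil⟩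
      · have htr : t ≠ r := by simpa using ht.2
        have hndq : q.support.Nodup := hq.support_nodup
        have happ : q.support = (q.takeUntil t htq).support ++ (q.dropUntil t htq).support.tail := by
          conv_lhs => rw [← q.take_spec htq]
          exact SimpleGraph.Walk.support_append _ _
        by_cases hrT : r ∈ (q.takeUntil t htq).support
        · have hdisj : (q.takeUntil t htq).support.Disjoint (q.dropUntil t htq).support.tail := by
            rw [happ] at hndq
            exact List.disjoint_of_nodup_append hndq
          have hrD : r ∉ (q.dropUntil t htq).support := by
            rw [SimpleGraph.Walk.support_eq_cons]
            intro h
            rcases List.mem_cons.mp h with h | h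
            · exact htr h.symm
            · exact hdisj hrT h
          have hmemD : ∀ z ∈ (q.dropUntil t htq).support, z ∈ S \ {r} := fun z hz =>
            ⟨hsupS z (q.support_dropUntil_subset htq hz), by
              simpa using fun h : z = r => hrD (h ▸ hz)⟩
          have hyA : y ∈ S \ {r} := hmemD y (q.dropUntil t htq).end_mem_support
          have h1 : (G.induce (S \ {r})).Reachable ⟨t, ht⟩ ⟨y, hyA⟩ :=
            induce_reachable_of_walk (q.dropUntil t htq) hmemD ht hyA
          have hadj : (G.induce (S \ {r})).Adj ⟨y, hyA⟩ ⟨u, huA⟩ := by simpa using huy.symm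
          exact h1.trans hadj.reachable
        · have hmemT : ∀ z ∈ (q.takeUntil t htq).support, z ∈ S \ {r} := fun z hz =>
            ⟨hsupS z (q.support_takeUntil_subset htq hz), by
              simpa using fun h : z = r => hrT (h ▸ hz)⟩
          have hxA : x ∈ S \ {r} := hmemT x (q.takeUntil t htq).start_mem_support
          have h1 : (G.induce (S \ {r})).Reachable ⟨x, hxA⟩ ⟨t, ht⟩ :=
            induce_reachable_of_walk (q.takeUntil t htq) hmemT hxA ht
          have hadj : (G.induce (S \ {r})).Adj ⟨x, hxA⟩ ⟨u, huA⟩ := by simpa using hux.symm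
          exact h1.symm.trans hadj.reachable
  obtain ⟨Bl, hSB, hB⟩ := exists_block ⟨hconn, hdel⟩
  exact hG.2 _ hB (hSB hxS) (hSB hyS) hxy

end Aux

section Core

open Relation SimpleGraph

variable {G : SimpleGraph V} {F X Y A B S : Set V} {u v w a b c d x y z : V}

/-- Monotonicity of the PSD forcing process in the initial filled set. -/
lemma psd_chain_mono (h : Relation.ReflTransGen (psdStep G) X Set.univ) :
    ∀ Y, X ⊆ Y → Relation.ReflTransGen (psdStep G) Y Set.univ := by
  induction h using Relation.ReflTransGen.head_induction_on with
  | refl =>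
    intro Y hY
    rw [Set.univ_subset_iff.mp hY]
  | head hstep _ ih =>
    obtain ⟨u, v, hf, rfl⟩ := hstep
    intro Y hXY
    by_cases hvY : v ∈ Y
    · exact ih Y (Set.insert_subset hvY hXY)
    · refine Relation.ReflTransGen.head ⟨u, v, ?_, rfl⟩ (ih _ (Set.insert_subset_insert hXY))
      exact ⟨hXY hf.1, hvY, hf.2.2.1,
        fun w hw hwY hr => hf.2.2.2 w hw (fun hwX => hwY (hXY hwX)) (reachAvoid_mono hXY hr)⟩

lemma reachAvoid_insert_of_comp (hv : v ∉ compOf G X d)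
    (ha : a ∈ compOf G X d) (h : reachAvoid G X a w) : reachAvoid G (insert v X) a w := by
  induction h with
  | refl => exact ReflTransGen.refl
  | @tail b c hab hstep ih =>
    have hbmem : b ∈ compOf G X d := compOf_closed ha hab
    have hcmem : c ∈ compOf G X d := hbmem.tail hstep
    refine ih.tail ⟨hstep.1, ?_, ?_⟩
    · simp only [Set.mem_insert_iff, not_or]
      exact ⟨fun h => hv (h ▸ hbmem), hstep.2.1⟩
    · simp only [Set.mem_insert_iff, not_or]
      exact ⟨fun h => hv (h ▸ hcmem), hstep.2.2⟩

/-- Every unfilled component of a PSD-completable position admits a PSD force into it. -/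
lemma exists_door (h : Relation.ReflTransGen (psdStep G) X Set.univ) :
    ∀ D ∈ unfilledComponents G X, ∃ u v, psdForce G X u v ∧ v ∈ D := by
  induction h using Relation.ReflTransGen.head_induction_on with
  | refl =>
    rintro D ⟨d, hd, rfl⟩
    exact absurd (Set.mem_univ d) hd
  | @head X' X'' hstep _ ih =>
    obtain ⟨u, v, hforce, rfl⟩ := hstep
    rintro D ⟨d, hd, rfl⟩
    by_cases hvD : v ∈ compOf G X' d
    · exact ⟨u, v, hforce, hvD⟩
    · have hdmem : d ∈ compOf G X' d := self_mem_compOf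
      have hcompeq : compOf G X' d = compOf G (insert v X') d := by
        apply Set.Subset.antisymm
        · exact fun w hw => reachAvoid_insert_of_comp hvD hdmem hw
        · exact fun w hw => reachAvoid_mono (Set.subset_insert _ _) hw
      have hdmem' : d ∉ insert v X' := by
        simp only [Set.mem_insert_iff, not_or]
        exact ⟨fun h => hvD (h ▸ hdmem), hd⟩
      obtain ⟨u₁, v₁, hf₁, hv₁D⟩ := ih (compOf G (insert v X') d) ⟨d, hdmem', rfl⟩
      rw [← hcompeq] at hv₁D
      have hv₁X : v₁ ∉ X' := compOf_notMem hd hv₁D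
      have hu₁ : u₁ ∈ X' := by
        rcases Set.mem_insert_iff.mp hf₁.1 with h | h
        · exfalso
          apply hvD
          exact compOf_closed hv₁D (ReflTransGen.single ⟨h ▸ hf₁.2.2.1.symm, hv₁X, h ▸ hforce.2.1⟩)
        · exact h
      refine ⟨u₁, v₁, ⟨hu₁, hv₁X, hf₁.2.2.1, ?_⟩, hv₁D⟩
      intro w hadj hwX hreach
      have hwD : w ∈ compOf G X' d := compOf_closed hv₁D hreach
      have hwv : w ≠ v := fun h => hvD (h ▸ hwD)
      refine hf₁.2.2.2 w hadj ?_ (reachAvoid_insert_of_comp hvD hv₁D hreach)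
      simp only [Set.mem_insert_iff, not_or]
      exact ⟨hwv, hwX⟩

/-- Every PSD force has a distinct "partner" forcing the same vertex, coming from a third
vertex of the block containing the forcing edge. -/
lemma door_partner [Fintype V] (hG : IsBlockGraph G)
    (hbig : ∀ B : Set V, IsBlock G B → 2 < B.ncard)
    (hf : psdForce G X u v) : ∃ z, z ∈ X ∧ z ≠ u ∧ psdForce G X z v := by
  classical
  have hu : u ∈ X := hf.1
  have hv : v ∉ X := hf.2.1
  have huv : G.Adj u v := hf.2.2.1
  have hcl2 : G.IsClique {u, v} := isClique_pair.mpr (fun _ => huv)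
  obtain ⟨B, hUB, hB⟩ := exists_block (isClique_noCutVertex hcl2 ⟨u, Set.mem_insert _ _⟩)
  have hclB : G.IsClique B := hG.2 _ hB
  have h3 := hbig B hB
  have huB : u ∈ B := hUB (Set.mem_insert _ _)
  have hvB : v ∈ B := hUB (Set.mem_insert_of_mem _ rfl)
  obtain ⟨z, hzB, hz_ne⟩ : ∃ z ∈ B, z ∉ ({u, v} : Set V) := by
    by_contra hcon
    push_neg at hcon
    have : B.ncard ≤ ({u, v} : Set V).ncard := Set.ncard_le_ncard hcon (Set.toFinite _)
    have h2 : ({u, v} : Set V).ncard ≤ 2 := by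
      apply (Set.ncard_insert_le _ _).trans
      simp [Set.ncard_singleton]
    omega
  simp only [Set.mem_insert_iff, Set.mem_singleton_iff, not_or] at hz_ne
  have hzu : G.Adj z u := hclB hzB huB hz_ne.1
  have hzv : G.Adj z v := hclB hzB hvB hz_ne.2
  have hzX : z ∈ X := by
    by_contra hzX
    exact hz_ne.2 (hf.2.2.2 z hzu.symm hzX (ReflTransGen.single ⟨hzv.symm, hv, hzX⟩))
  refine ⟨z, hzX, hz_ne.1, hzX, hv, hzv, ?_⟩
  intro y hady hyX hreach
  by_contra hyv
  obtain ⟨p, hp⟩ := reachAvoid_exists_walk hreach hv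
  have hzp : z ∉ p.support := fun h => hp z h hzX
  have hvy : G.Adj v y := adj_of_avoid_walk hG hzv hady (fun h => hyv h.symm) p hzp
  have hcl3 : G.IsClique {z, v, y} := by
    intro s hs t ht hst
    simp only [Set.mem_insert_iff, Set.mem_singleton_iff] at hs ht
    rcases hs with rfl | rfl | rfl <;> rcases ht with rfl | rfl | rfl <;>
      first
        | exact absurd rfl hst
        | exact hzv
        | exact hzv.symm
        | exact hady
        | exact hady.symm
        | exact hvy
        | exact hvy.symm
  obtain ⟨B', hUB', hB'⟩ := exists_block (isClique_noCutVertex hcl3 ⟨z, Set.mem_insert _ _⟩)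
  have hzB' : z ∈ B' := hUB' (Set.mem_insert _ _)
  have hvB' : v ∈ B' := hUB' (Set.mem_insert_of_mem _ (Set.mem_insert _ _))
  have hyB' : y ∈ B' := hUB' (Set.mem_insert_of_mem _ (Set.mem_insert_of_mem _ rfl))
  have hBeq : B = B' := block_eq_block hG hB hB' hzv.ne hzB hvB hzB' hvB'
  have hyB : y ∈ B := hBeq ▸ hyB'
  have hyu : y ≠ u := fun h => hyX (h ▸ hu)
  have hadjuy : G.Adj u y := hclB huB hyB hyu.symm
  exact hyv (hf.2.2.2 y hadjuy hyX hreach)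

lemma compOf_ne_center (ha : a ∈ compOf G ({u} : Set V) v) (hvu : v ≠ u) : a ≠ u := by
  have := compOf_notMem (X := ({u} : Set V)) (by simpa using hvu) ha
  simpa using this

/-- The descent step: given a PSD force whose forcing vertex has another unfilled
neighbour (i.e. it is not a standard force), produce a PSD force with a strictly
larger side-component. -/
lemma descent [Fintype V] (hG : IsBlockGraph G)
    (hbig : ∀ B : Set V, IsBlock G B → 2 < B.ncard)
    (hno : ∀ u v, ¬ forceIn G Set.univ X u v)
    (hdoor : ∀ D ∈ unfilledComponents G X, ∃ u v, psdForce G X u v ∧ v ∈ D)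
    (hf : psdForce G X u v) :
    ∃ u' v', psdForce G X u' v' ∧ compOf G ({u} : Set V) v ⊂ compOf G ({u'} : Set V) v' := by
  classical
  have hu : u ∈ X := hf.1
  have hv : v ∉ X := hf.2.1
  have huv : G.Adj u v := hf.2.2.1
  have hvu : v ≠ u := fun h => hv (h ▸ hu)
  have husub : ({u} : Set V) ⊆ X := by simpa using hu
  -- u has an extra unfilled neighbour w
  obtain ⟨w, hadjw, hwX, hwv⟩ : ∃ w, G.Adj u w ∧ w ∉ X ∧ w ≠ v := by
    have hlast : ¬ ∀ w ∈ (Set.univ : Set V), G.Adj u w → w ∉ X → w = v :=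
      fun hww => hno u v ⟨trivial, trivial, hu, hv, huv, hww⟩
    push_neg at hlast
    obtain ⟨w, _, h1, h2, h3⟩ := hlast
    exact ⟨w, h1, h2, h3⟩
  have hwu : w ≠ u := fun h => hwX (h ▸ hu)
  -- w is not in the side-component S of v
  have hwS : w ∉ compOf G ({u} : Set V) v := by
    intro hwS
    obtain ⟨p, hp⟩ := reachAvoid_exists_walk hwS (by simpa using hvu)
    have hup : u ∉ p.support := fun h => hp u h rfl
    have hadjvw : G.Adj v w := adj_of_avoid_walk hG huv hadjw (Ne.symm hwv) p hup
    exact hwv (hf.2.2.2 w hadjw hwX (ReflTransGen.single ⟨hadjvw, hv, hwX⟩))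
  -- the unfilled component of w is disjoint from S
  have hDS : ∀ α, α ∈ compOf G X w → α ∉ compOf G ({u} : Set V) v := by
    intro α hα hαS
    exact hwS (compOf_closed hαS (reachAvoid_symm (reachAvoid_mono husub hα)))
  -- a door into the component of w
  obtain ⟨u₁, v₁, hf₁, hv₁D⟩ := hdoor (compOf G X w) (compOf_mem_unfilledComponents hwX)
  -- adjust so that the new forcing vertex differs from u
  obtain ⟨u', hu'X, hu'ne, hf'⟩ : ∃ u', u' ∈ X ∧ u' ≠ u ∧ psdForce G X u' v₁ := by
    rcases eq_or_ne u₁ u with rfl | hne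
    · obtain ⟨z, hz1, hz2, hz3⟩ := door_partner hG hbig hf₁
      exact ⟨z, hz1, hz2, hz3⟩
    · exact ⟨u₁, hf₁.1, hne, hf₁⟩
  have hv₁X : v₁ ∉ X := hf₁.2.1
  have hv₁S : v₁ ∉ compOf G ({u} : Set V) v := hDS v₁ hv₁D
  have hv₁u' : v₁ ≠ u' := fun h => hv₁X (h ▸ hu'X)
  -- u' is not in S
  have hu'S : u' ∉ compOf G ({u} : Set V) v := by
    intro h
    apply hv₁S
    refine compOf_closed h (ReflTransGen.single ⟨hf'.2.2.1, ?_, ?_⟩)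
    · simpa using compOf_ne_center h hvu
    · simpa using fun hh : v₁ = u => hv₁X (hh ▸ hu)
  -- reach from v₁ back to v avoiding u'
  have hwv₁ : reachAvoid G ({u'} : Set V) w v₁ :=
    reachAvoid_mono (by simpa using hu'X) hv₁D
  have hv₁v : reachAvoid G ({u'} : Set V) v₁ v := by
    refine (reachAvoid_symm hwv₁).trans ?_
    refine ReflTransGen.head ⟨hadjw.symm, ?_, by simpa using hu'ne.symm⟩ ?_
    · simpa using fun hh : w = u' => hwX (hh ▸ hu'X)
    · refine ReflTransGen.single ⟨huv, by simpa using hu'ne.symm, ?_⟩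
      simpa using fun hh : v = u' => hu'S (hh ▸ self_mem_compOf)
  -- every element of S is in the new side-component S'
  have htrans : ∀ x ∈ compOf G ({u} : Set V) v, x ∈ compOf G ({u'} : Set V) v₁ := by
    intro x hx
    refine compOf_closed (a := v) hv₁v ?_
    clear hv₁v
    induction hx with
    | refl => exact ReflTransGen.refl
    | @tail b c hvb hstep ih =>
      have hbS : b ∈ compOf G ({u} : Set V) v := hvb
      have hcS : c ∈ compOf G ({u} : Set V) v := hvb.tail hstep
      refine ih.tail ⟨hstep.1, ?_, ?_⟩
      · simpa using fun hh : b = u' => hu'S (hh ▸ hbS)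
      · simpa using fun hh : c = u' => hu'S (hh ▸ hcS)
  -- u itself is in the new side-component
  have huS' : u ∈ compOf G ({u'} : Set V) v₁ := by
    refine compOf_closed (a := w) (reachAvoid_symm hwv₁) ?_
    refine ReflTransGen.single ⟨hadjw.symm, ?_, by simpa using hu'ne.symm⟩
    simpa using fun hh : w = u' => hwX (hh ▸ hu'X)
  have huSno : u ∉ compOf G ({u} : Set V) v := fun h => compOf_ne_center h hvu rfl
  exact ⟨u', v₁, hf', ⟨fun x hx => htrans x hx, fun hback => huSno (hback huS')⟩⟩

/-- Key structural lemma: in a block graph with all blocks of more than two vertices,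
any non-terminal PSD-completable position admits a standard force. -/
lemma exists_std_force [Fintype V] (hG : IsBlockGraph G)
    (hbig : ∀ B : Set V, IsBlock G B → 2 < B.ncard)
    (h : Relation.ReflTransGen (psdStep G) X Set.univ) (hne : X ≠ Set.univ) :
    ∃ u v, forceIn G Set.univ X u v := by
  classical
  by_contra hno
  push_neg at hno
  have hno' : ∀ u v, ¬ forceIn G Set.univ X u v := fun u v hf => (hno u v hf).elim
  have hdoor := exists_door h
  obtain ⟨c, hc⟩ : ∃ c, c ∉ X := by
    by_contra hcc
    push_neg at hcc
    exact hne (Set.eq_univ_of_forall hcc)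
  obtain ⟨u₀, v₀, hf₀, _⟩ := hdoor (compOf G X c) (compOf_mem_unfilledComponents hc)
  have key : ∀ n (u v : V), psdForce G X u v →
      Fintype.card V ≤ (compOf G ({u} : Set V) v).ncard + n → False := by
    intro n
    induction n with
    | zero =>
      intro u v hf hcard
      obtain ⟨u', v', hf', hsub⟩ := descent hG hbig hno' hdoor hf
      have h1 : (compOf G ({u} : Set V) v).ncard < (compOf G ({u'} : Set V) v').ncard :=
        Set.ncard_lt_ncard hsub (Set.toFinite _)
      have h2 : (compOf G ({u'} : Set V) v').ncard ≤ Fintype.card V :=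
        le_trans (Set.ncard_le_ncard (Set.subset_univ _) (Set.toFinite _))
          (by rw [Set.ncard_univ, Nat.card_eq_fintype_card])
      omega
    | succ n ih =>
      intro u v hf hcard
      obtain ⟨u', v', hf', hsub⟩ := descent hG hbig hno' hdoor hf
      have h1 : (compOf G ({u} : Set V) v).ncard < (compOf G ({u'} : Set V) v').ncard :=
        Set.ncard_lt_ncard hsub (Set.toFinite _)
      exact ih u' v' hf' (by omega)
  exact key (Fintype.card V) u₀ v₀ hf₀ (by omega)

/-- Any PSD-completable set is a standard zero forcing set (under the block hypotheses). -/
lemma psd_to_zf [Fintype V] (hG : IsBlockGraph G)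
    (hbig : ∀ B : Set V, IsBlock G B → 2 < B.ncard) :
    ∀ X : Set V, Relation.ReflTransGen (psdStep G) X Set.univ →
      Relation.ReflTransGen (zfStep G) X Set.univ := by
  classical
  intro X
  generalize hn : (Set.univ \ X).ncard = n
  induction n using Nat.strong_induction_on generalizing X with
  | _ n ih =>
    intro h
    by_cases hX : X = Set.univ
    · subst hX; exact ReflTransGen.refl
    · obtain ⟨u, v, hforce⟩ := exists_std_force hG hbig h hX
      have hv : v ∉ X := hforce.2.2.2.1
      have hmeas : (Set.univ \ insert v X).ncard < n := by
        rw [← hn]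
        apply Set.ncard_lt_ncard _ (Set.toFinite _)
        constructor
        · exact Set.diff_subset_diff_right (Set.subset_insert _ _)
        · intro hsub
          have : v ∈ Set.univ \ insert v X := hsub ⟨trivial, hv⟩
          exact this.2 (Set.mem_insert _ _)
      refine Relation.ReflTransGen.head ⟨u, v, hforce, rfl⟩ ?_
      exact ih _ hmeas _ rfl (psd_chain_mono h _ (Set.subset_insert _ _))

end Core

section Game

open Relation SimpleGraph

variable {G : SimpleGraph V} {F X S : Set V} {q t : ℕ} {u v : V}

lemma win_t_succ (h : ZqWinFrom G q F t) : ZqWinFrom G q F (t + 1) := by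
  induction h with
  | done t => exact .done _
  | rule1 v hv _ ih => exact .rule1 v hv ih
  | rule2 u v huv _ ih => exact .rule2 u v huv ih
  | rule3 𝒞 h𝒞 hcard next hnext _ ih => exact .rule3 𝒞 h𝒞 hcard next hnext ih

lemma win_mono {t t' : ℕ} (htt : t ≤ t') (h : ZqWinFrom G q F t) : ZqWinFrom G q F t' := by
  induction htt with
  | refl => exact h
  | step _ ih => exact win_t_succ ih

lemma win_of_zf_chain (h : Relation.ReflTransGen (zfStep G) F Set.univ) (t : ℕ) :
    ZqWinFrom G q F t := by
  induction h using Relation.ReflTransGen.head_induction_on with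
  | refl => exact .done t
  | head hstep _ ih =>
    obtain ⟨u, v, hf, rfl⟩ := hstep
    exact .rule2 u v hf ih

lemma win_union_finset [DecidableEq V] (s : Finset V) :
    ∀ {F : Set V} {t : ℕ}, ZqWinFrom G q (F ∪ ↑s) t → ZqWinFrom G q F (t + s.card) := by
  induction s using Finset.induction_on with
  | empty => intro F t h; simpa using h
  | @insert a s ha ih =>
    intro F t h
    have heq : F ∪ ↑(insert a s) = insert a (F ∪ ↑s) := by
      rw [Finset.coe_insert, Set.union_insert]
    rw [heq] at h
    by_cases haF : a ∈ F ∪ ↑s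
    · rw [Set.insert_eq_self.mpr haF] at h
      have := ih h
      exact win_mono (by rw [Finset.card_insert_of_notMem ha]; omega) this
    · have h' : ZqWinFrom G q (F ∪ ↑s) (t + 1) := .rule1 a haF h
      have := ih h'
      rw [Finset.card_insert_of_notMem ha]
      exact win_mono (by omega) this

lemma win_whole [Fintype V] [DecidableEq V] (q : ℕ) :
    ZqWinFrom G q ∅ (Finset.univ : Finset V).card := by
  have h0 : ZqWinFrom G q (∅ ∪ ↑(Finset.univ : Finset V)) 0 := by
    have : (∅ ∪ ↑(Finset.univ : Finset V) : Set V) = Set.univ := by simp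
    rw [this]
    exact .done 0
  simpa using win_union_finset _ h0

lemma rule3_to_psd {C : Set V} (hC : C ∈ unfilledComponents G F) (S : Set V) :
    ∀ {N : Set V}, Relation.ReflTransGen (rule3Step G (F ∪ C)) F N →
      (F ⊆ N ∧ N ⊆ F ∪ C) ∧
        Relation.ReflTransGen (psdStep G) (F ∪ S) (N ∪ S) := by
  intro N h
  induction h with
  | refl => exact ⟨⟨subset_rfl, Set.subset_union_left⟩, ReflTransGen.refl⟩
  | @tail M M' hchain hstep ih =>
    obtain ⟨⟨hFM, hsub⟩, hpsd⟩ := ih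
    obtain ⟨u, v, hf, rfl⟩ := hstep
    have hvA : v ∈ F ∪ C := hf.2.1
    have huM : u ∈ M := hf.2.2.1
    have hvM : v ∉ M := hf.2.2.2.1
    have hadj : G.Adj u v := hf.2.2.2.2.1
    refine ⟨⟨hFM.trans (Set.subset_insert _ _), Set.insert_subset hvA hsub⟩, ?_⟩
    by_cases hvS : v ∈ S
    · have : insert v M ∪ S = M ∪ S := by
        rw [Set.insert_union]
        exact Set.insert_eq_self.mpr (Set.mem_union_right _ hvS)
      rw [this]
      exact hpsd
    · refine hpsd.tail ⟨u, v, ?_, by rw [Set.insert_union]⟩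
      obtain ⟨d, hdF, hCdef⟩ := hC
      have hvC : v ∈ C := by
        rcases hvA with h | h
        · exact absurd (hFM h) hvM
        · exact h
      refine ⟨Or.inl huM, fun hmem => hmem.elim hvM hvS, hadj, ?_⟩
      intro w hadjw hwMS hreach
      have hwC : w ∈ C := by
        subst hCdef
        refine compOf_closed hvC ?_
        refine reachAvoid_mono ?_ hreach
        intro z hz
        exact Or.inl (hFM hz)
      exact hf.2.2.2.2.2 w (Or.inr hwC) hadjw (fun hwM => hwMS (Or.inl hwM))

/-- From a winning strategy in the `q`-analogue game, extract a PSD forcing completion. -/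
lemma win_to_psd (h : ZqWinFrom G q F t) :
    ∃ S : Set V, S.ncard ≤ t ∧ Relation.ReflTransGen (psdStep G) (F ∪ S) Set.univ := by
  induction h with
  | done t =>
    exact ⟨∅, by simp, by rw [Set.union_empty]⟩
  | @rule1 F t v hv h ih =>
    obtain ⟨S, hS, hchain⟩ := ih
    refine ⟨insert v S, (Set.ncard_insert_le _ _).trans (by omega), ?_⟩
    have : F ∪ insert v S = insert v F ∪ S := by
      rw [Set.union_insert, Set.insert_union]
    rw [this]
    exact hchain
  | @rule2 F t u v huv h ih =>
    obtain ⟨S, hS, hchain⟩ := ih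
    refine ⟨S, hS, ?_⟩
    by_cases hvS : v ∈ S
    · have : F ∪ S = insert v F ∪ S := by
        rw [Set.insert_union]
        exact (Set.insert_eq_self.mpr (Set.mem_union_right _ hvS)).symm
      rw [this]
      exact hchain
    · have hvF : v ∉ F := huv.2.2.2.1
      refine Relation.ReflTransGen.head ⟨u, v, ?_, rfl⟩ ?_
      · refine ⟨Or.inl huv.2.2.1, fun hmem => hmem.elim hvF hvS, huv.2.2.2.2.1, ?_⟩
        intro w hadjw hwFS _
        exact huv.2.2.2.2.2 w trivial hadjw (fun hwF => hwFS (Or.inl hwF))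
      · have : insert v (F ∪ S) = insert v F ∪ S := by rw [Set.insert_union]
        rw [this]
        exact hchain
  | @rule3 F t 𝒞 h𝒞 hcard next hnext h ih =>
    have hCne : 𝒞.Nonempty := by
      apply Set.nonempty_of_ncard_ne_zero
      omega
    obtain ⟨C, hC⟩ := hCne
    have h1 : ({C} : Set (Set V)) ⊆ 𝒞 := by simpa using hC
    have h2 : ({C} : Set (Set V)).Nonempty := ⟨C, rfl⟩
    obtain ⟨S, hS, hchain⟩ := ih {C} h1 h2
    have hchain3 := hnext {C} h1 h2
    have hAeq : F ∪ ⋃₀ ({C} : Set (Set V)) = F ∪ C := by simp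
    rw [hAeq] at hchain3
    obtain ⟨-, hpsd⟩ := rule3_to_psd (h𝒞 hC) S hchain3
    exact ⟨S, hS, hpsd.trans hchain⟩

end Game

/-- for a block graph all of whose blocks have more than two vertices,
`Z_q(G) = Z(G)` for every `q ≥ 0`. -/
theorem stmt8 {V : Type*} [Fintype V] (G : SimpleGraph V)
    (hG : IsBlockGraph G) (hbig : ∀ B : Set V, IsBlock G B → 2 < B.ncard)
    (q : ℕ) : qZeroForcingNumber G q = zeroForcingNumber G := by
  classical
  apply le_antisymm
  · -- Z_q(G) ≤ Z(G)
    have hzne : {n | ∃ S : Set V, S.ncard = n ∧ IsZeroForcingSet G S}.Nonempty :=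
      ⟨(Set.univ : Set V).ncard, Set.univ, rfl, Relation.ReflTransGen.refl⟩
    obtain ⟨S, hScard, hSzf⟩ := Nat.sInf_mem hzne
    apply Nat.sInf_le
    show ZqWinFrom G q ∅ (zeroForcingNumber G)
    have h0 : ZqWinFrom G q (∅ ∪ ↑S.toFinset) 0 := by
      rw [Set.empty_union, Set.coe_toFinset]
      exact win_of_zf_chain hSzf 0
    have hfin := win_union_finset _ h0
    have hcard : S.toFinset.card = zeroForcingNumber G := by
      rw [← Set.ncard_eq_toFinset_card']
      exact hScard
    rw [← hcard]
    simpa using hfin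
  · -- Z(G) ≤ Z_q(G)
    have hwne : {t | ZqWinFrom G q ∅ t}.Nonempty := ⟨_, win_whole q⟩
    have hwin : ZqWinFrom G q ∅ (qZeroForcingNumber G q) := Nat.sInf_mem hwne
    obtain ⟨S, hcard, hchain⟩ := win_to_psd hwin
    rw [Set.empty_union] at hchain
    have hzf : IsZeroForcingSet G S := psd_to_zf hG hbig S hchain
    exact le_trans (Nat.sInf_le ⟨S, rfl, hzf⟩) hcard

end ZqForcing
end

section
/- For all integers η ≥ 2 and l ≥ 1, the generalized windmill graph of Type I with k = 1 satisfies Z_0(W'(η,1,l)) = l, where Z_0 = Z_+ is the positive semidefinite zero forcing number. -/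
namespace ZqForcing

variable {V : Type*}

section Stmt12Aux

variable {η l : ℕ}

local notation "Vt" => (Fin η × Fin 1) ⊕ Fin l

set_option linter.unnecessarySeqFocus false in
lemma adj_iff {a b : Vt} :
    (windmillI η 1 l).Adj a b ↔ a ≠ b ∧ (a.isRight ∨ b.isRight) := by
  rcases a with ⟨i, x⟩ | c <;> rcases b with ⟨i', x'⟩ | c' <;>
    simp only [windmillI, SimpleGraph.fromRel_adj] <;>
    simp [Sum.isRight, Fin.ext_iff, Prod.ext_iff] <;> omega

lemma card_V : Nat.card Vt = η + l := by
  simp [Nat.card_eq_fintype_card]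

lemma ncard_centers : (Set.range (Sum.inr : Fin l → Vt)).ncard = l := by
  have : (Set.range (Sum.inr : Fin l → Vt)).ncard
      = Nat.card (Set.range (Sum.inr : Fin l → Vt)) := rfl
  rw [this, Nat.card_range_of_injective Sum.inr_injective, Nat.card_eq_fintype_card,
    Fintype.card_fin]

/-- If some center is unfilled, every unfilled vertex reaches every unfilled vertex in `G-F`. -/
lemma reach_all {F : Set Vt} {c : Fin l} (hc : Sum.inr c ∉ F) {v w : Vt}
    (hv : v ∉ F) (hw : w ∉ F) : reachAvoid (windmillI η 1 l) F v w := by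
  by_cases hvw : v = w
  · exact hvw ▸ Relation.ReflTransGen.refl
  by_cases hvc : v = Sum.inr c
  · subst hvc
    exact Relation.ReflTransGen.single ⟨adj_iff.2 ⟨hvw, Or.inl rfl⟩, hv, hw⟩
  by_cases hwc : w = Sum.inr c
  · subst hwc
    exact Relation.ReflTransGen.single ⟨adj_iff.2 ⟨hvw, Or.inr rfl⟩, hv, hw⟩
  · exact Relation.ReflTransGen.head ⟨adj_iff.2 ⟨hvc, Or.inr rfl⟩, hv, hc⟩
      (Relation.ReflTransGen.single ⟨adj_iff.2 ⟨fun h => hwc h.symm, Or.inl rfl⟩, hc, hw⟩)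

/-- If all centers are filled, each unfilled leaf is isolated in `G - F`. -/
lemma leaf_isolated {F : Set Vt} (hctr : ∀ c : Fin l, Sum.inr c ∈ F) {p : Fin η × Fin 1}
    {w : Vt} (h : reachAvoid (windmillI η 1 l) F (Sum.inl p) w) : w = Sum.inl p := by
  rcases (Relation.ReflTransGen.cases_head h) with rfl | ⟨b, ⟨hadj, _, hb⟩, _⟩
  · rfl
  · exfalso
    rcases adj_iff.1 hadj with ⟨_, hr | hr⟩
    · simp [Sum.isRight] at hr
    · rcases b with p' | c
      · simp [Sum.isRight] at hr
      · exact hb (hctr c)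

/-- Any PSD force requires at least `l` filled vertices. -/
lemma psd_force_lb (hη : 2 ≤ η) (hl : 1 ≤ l) {F : Set Vt} {u v : Vt}
    (h : psdForce (windmillI η 1 l) F u v) : l ≤ F.ncard := by
  obtain ⟨hu, hv, hadj, huniq⟩ := h
  by_cases hc : ∀ c : Fin l, Sum.inr c ∈ F
  · calc l = (Set.range (Sum.inr : Fin l → Vt)).ncard := ncard_centers.symm
      _ ≤ F.ncard := Set.ncard_le_ncard (Set.range_subset_iff.2 hc) F.toFinite
  push_neg at hc
  obtain ⟨c, hcF⟩ := hc
  have key : ∀ w : Vt, (windmillI η 1 l).Adj u w → w ∉ F → w = v := by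
    intro w haw hwF
    exact huniq w haw hwF (reach_all hcF hv hwF)
  rcases u with p | cu
  · -- u is a filled leaf; v is a center, and all other centers are filled
    have hvc : v.isRight := by
      rcases adj_iff.1 hadj with ⟨_, hr | hr⟩
      · simp [Sum.isRight] at hr
      · exact hr
    have hsub : insert (Sum.inl p) (Set.range (Sum.inr : Fin l → Vt) \ {v}) ⊆ F := by
      rintro w (rfl | ⟨⟨c', rfl⟩, hwv⟩)
      · exact hu
      · by_contra hwF
        exact hwv (key _ (adj_iff.2 ⟨by simp, Or.inr rfl⟩) hwF)
    have h1 : (Set.range (Sum.inr : Fin l → Vt) \ {v}).ncard = l - 1 := by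
      have hvmem : v ∈ Set.range (Sum.inr : Fin l → Vt) := by
        rcases v with p' | c' ; · simp [Sum.isRight] at hvc
        exact ⟨c', rfl⟩
      rw [Set.ncard_diff_singleton_of_mem hvmem, ncard_centers]
    have h2 : (insert (Sum.inl p) (Set.range (Sum.inr : Fin l → Vt) \ {v})).ncard = l := by
      rw [Set.ncard_insert_of_notMem (by rintro ⟨⟨c', hc'⟩, -⟩; exact Sum.inr_ne_inl hc'),
        h1]
      omega
    calc l = _ := h2.symm
      _ ≤ F.ncard := Set.ncard_le_ncard hsub F.toFinite
  · -- u is a filled center: everything unfilled equals v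
    have hcompl : Fᶜ = {v} := by
      ext w
      simp only [Set.mem_compl_iff, Set.mem_singleton_iff]
      constructor
      · intro hwF
        have hwu : w ≠ Sum.inr cu := by rintro rfl; exact hwF hu
        exact key w (adj_iff.2 ⟨fun h => hwu h.symm, Or.inl rfl⟩) hwF
      · rintro rfl; exact hv
    have := Set.ncard_add_ncard_compl F
    rw [hcompl, Set.ncard_singleton, card_V] at this
    omega

/-- A standard (global) force is in particular a PSD force. -/
lemma forceIn_univ_psd {G : SimpleGraph Vt} {F : Set Vt} {u v : Vt}
    (h : forceIn G Set.univ F u v) : psdForce G F u v := by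
  obtain ⟨-, -, hu, hv, hadj, huniq⟩ := h
  exact ⟨hu, hv, hadj, fun w haw hwF _ => huniq w (Set.mem_univ w) haw hwF⟩

/-- A rule-3 force inside `F ∪ C`, `C` an unfilled component, is a PSD force. -/
lemma forceIn_comp_psd {G : SimpleGraph Vt} {F C : Set Vt} {u v : Vt}
    (hC : C ∈ unfilledComponents G F) (h : forceIn G (F ∪ C) F u v) : psdForce G F u v := by
  obtain ⟨hu, hvA, huF, hvF, hadj, huniq⟩ := h
  obtain ⟨v₀, hv₀, rfl⟩ := hC
  have hvC : reachAvoid G F v₀ v := by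
    rcases hvA with hvF' | hvC
    · exact absurd hvF' hvF
    · exact hvC
  refine ⟨huF, hvF, hadj, fun w haw hwF hreach => ?_⟩
  exact huniq w (Or.inr (hvC.trans hreach)) haw hwF

lemma psd_lb (hη : 2 ≤ η) (hl : 1 ≤ l) {S : Set Vt}
    (h : IsPSDForcingSet (windmillI η 1 l) S) : l ≤ S.ncard := by
  rcases h.cases_head with rfl | ⟨F', ⟨u, v, hf, -⟩, -⟩
  · rw [Set.ncard_univ, card_V]; omega
  · exact psd_force_lb hη hl hf

lemma zq_lb (hη : 2 ≤ η) (hl : 1 ≤ l) {F : Set Vt} {t : ℕ}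
    (h : ZqWinFrom (windmillI η 1 l) 0 F t) : l ≤ F.ncard + t := by
  induction h with
  | done t => rw [Set.ncard_univ, card_V]; omega
  | rule1 v hv _ ih =>
      rw [Set.ncard_insert_of_notMem hv (Set.toFinite _)] at ih
      omega
  | rule2 u v huv _ _ =>
      have := psd_force_lb hη hl (forceIn_univ_psd huv)
      omega
  | rule3 𝒞 h𝒞 hcard next hnext _ ih =>
      have hne : 𝒞.Nonempty := Set.nonempty_of_ncard_ne_zero (s := 𝒞) (by omega)
      obtain ⟨C, hC⟩ := hne
      have h1 : ({C} : Set (Set Vt)) ⊆ 𝒞 := Set.singleton_subset_iff.2 hC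
      have h2 : ({C} : Set (Set Vt)).Nonempty := Set.singleton_nonempty C
      rcases (hnext {C} h1 h2).cases_head with heq | ⟨F₁, ⟨u, v, hf, -⟩, -⟩
      · have := ih {C} h1 h2
        rw [← heq] at this
        exact this
      · rw [Set.sUnion_singleton] at hf
        have := psd_force_lb hη hl (forceIn_comp_psd (h𝒞 hC) hf)
        omega

/-- The centers form a PSD forcing set. -/
lemma compl_insert' {F : Set Vt} {v : Vt} : (insert v F)ᶜ = Fᶜ \ {v} := by
  ext w; simp [not_or, and_comm]

lemma psd_fill (hl : 1 ≤ l) : ∀ (n : ℕ) (F : Set Vt), Fᶜ.ncard = n →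
    Set.range (Sum.inr : Fin l → Vt) ⊆ F →
    Relation.ReflTransGen (psdStep (windmillI η 1 l)) F Set.univ := by
  intro n
  induction n using Nat.strong_induction_on with
  | _ n ih =>
    intro F hn hctr
    by_cases hF : Fᶜ = ∅
    · rw [Set.compl_empty_iff.1 hF]
    · obtain ⟨v, hv⟩ := Set.nonempty_iff_ne_empty.2 hF
      have hvF : v ∉ F := hv
      have hc0 : ∀ c : Fin l, Sum.inr c ∈ F := fun c => hctr ⟨c, rfl⟩
      obtain ⟨p, rfl⟩ : ∃ p, v = Sum.inl p := by
        rcases v with p | c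
        · exact ⟨p, rfl⟩
        · exact absurd (hc0 c) hvF
      have hforce : psdForce (windmillI η 1 l) F (Sum.inr ⟨0, hl⟩) (Sum.inl p) := by
        refine ⟨hc0 _, hvF, adj_iff.2 ⟨Sum.inr_ne_inl, Or.inl rfl⟩, ?_⟩
        intro w _ _ hreach
        exact leaf_isolated hc0 hreach
      refine Relation.ReflTransGen.head ⟨_, _, hforce, rfl⟩ ?_
      have hlt : (insert (Sum.inl p) F)ᶜ.ncard < n := by
        rw [compl_insert', Set.ncard_diff_singleton_of_mem hv, hn]
        have : 0 < n := hn ▸ (Set.ncard_pos (Set.toFinite _)).2 ⟨_, hv⟩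
        omega
      exact ih _ hlt _ rfl (hctr.trans (Set.subset_insert _ _))

lemma IsPSDForcingSet_centers (hl : 1 ≤ l) :
    IsPSDForcingSet (windmillI η 1 l) (Set.range (Sum.inr : Fin l → Vt)) :=
  psd_fill hl _ _ rfl le_rfl

lemma zq_mono {G : SimpleGraph Vt} {q : ℕ} {F : Set Vt} {t t' : ℕ}
    (h : ZqWinFrom G q F t) (ht : t ≤ t') : ZqWinFrom G q F t' := by
  induction h generalizing t' with
  | done t => exact ZqWinFrom.done t'
  | rule1 v hv _ ih =>
      obtain ⟨t'', rfl⟩ : ∃ t'', t' = t'' + 1 := ⟨t' - 1, by omega⟩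
      exact ZqWinFrom.rule1 v hv (ih (by omega))
  | rule2 u v huv _ ih => exact ZqWinFrom.rule2 u v huv (ih ht)
  | rule3 𝒞 h𝒞 hcard next hnext _ ih =>
      exact ZqWinFrom.rule3 𝒞 h𝒞 hcard next hnext (fun 𝒮 h1 h2 => ih 𝒮 h1 h2 ht)

lemma zq_insert {G : SimpleGraph Vt} {q : ℕ} {F : Set Vt} {v : Vt} {t : ℕ}
    (h : ZqWinFrom G q (insert v F) t) : ZqWinFrom G q F (t + 1) := by
  by_cases hv : v ∈ F
  · rw [Set.insert_eq_self.2 hv] at h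
    exact zq_mono h (by omega)
  · exact ZqWinFrom.rule1 v hv h

lemma zq_fill_finset {G : SimpleGraph Vt} {q : ℕ} (s : Finset Vt) :
    ∀ (F : Set Vt) (t : ℕ), ZqWinFrom G q (F ∪ ↑s) t → ZqWinFrom G q F (t + s.card) := by
  induction s using Finset.induction_on with
  | empty => intro F t h; simpa using h
  | @insert a s ha ih =>
      intro F t h
      rw [Finset.coe_insert, Set.union_insert] at h
      have h1 : ZqWinFrom G q (F ∪ ↑s) (t + 1) := zq_insert h
      have h2 := ih F (t + 1) h1
      rw [Finset.card_insert_of_notMem ha]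
      have : t + 1 + s.card = t + (s.card + 1) := by omega
      rwa [this] at h2

lemma zq_centers (hl : 1 ≤ l) : ∀ (n : ℕ) (F : Set Vt), Fᶜ.ncard = n →
    Set.range (Sum.inr : Fin l → Vt) ⊆ F → ZqWinFrom (windmillI η 1 l) 0 F 0 := by
  intro n
  induction n using Nat.strong_induction_on with
  | _ n ih =>
    intro F hn hctr
    by_cases hF : Fᶜ = ∅
    · rw [Set.compl_empty_iff.1 hF]; exact ZqWinFrom.done 0
    · obtain ⟨v, hv⟩ := Set.nonempty_iff_ne_empty.2 hF
      have hvF : v ∉ F := hv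
      have hc0 : ∀ c : Fin l, Sum.inr c ∈ F := fun c => hctr ⟨c, rfl⟩
      refine ZqWinFrom.rule3 {{v}} ?_ ?_ (fun _ _ _ => insert v F) ?_ ?_
      · rintro C rfl
        refine ⟨v, hvF, ?_⟩
        ext w
        simp only [Set.mem_singleton_iff, Set.mem_setOf_eq]
        constructor
        · rintro rfl; exact Relation.ReflTransGen.refl
        · intro hreach
          obtain ⟨p, rfl⟩ : ∃ p, v = Sum.inl p := by
            rcases v with p | c
            · exact ⟨p, rfl⟩
            · exact absurd (hc0 c) hvF
          exact leaf_isolated hc0 hreach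
      · rw [Set.ncard_singleton]
      · intro 𝒮 h1 h2
        have h𝒮 : 𝒮 = {{v}} := by
          rcases Set.subset_singleton_iff_eq.1 h1 with rfl | rfl
          · exact absurd rfl h2.ne_empty
          · rfl
        subst h𝒮
        rw [Set.sUnion_singleton]
        refine Relation.ReflTransGen.single ⟨Sum.inr ⟨0, hl⟩, v, ?_, rfl⟩
        refine ⟨Or.inl (hc0 _), Or.inr rfl, hc0 _, hvF, ?_, ?_⟩
        · rcases v with p | c
          · exact adj_iff.2 ⟨Sum.inr_ne_inl, Or.inl rfl⟩
          · exact absurd (hc0 c) hvF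
        · rintro w (hwF | rfl) _ hwnF
          · exact absurd hwF hwnF
          · rfl
      · intro 𝒮 h1 h2
        have hlt : (insert v F)ᶜ.ncard < n := by
          rw [compl_insert', Set.ncard_diff_singleton_of_mem hv, hn]
          have : 0 < n := hn ▸ (Set.ncard_pos (Set.toFinite _)).2 ⟨_, hv⟩
          omega
        exact ih _ hlt _ rfl (hctr.trans (Set.subset_insert _ _))

lemma zq_ub (hl : 1 ≤ l) : ZqWinFrom (windmillI η 1 l) 0 ∅ l := by
  have h0 : ZqWinFrom (windmillI η 1 l) 0 (Set.range (Sum.inr : Fin l → Vt)) 0 :=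
    zq_centers hl _ _ rfl le_rfl
  have hs : ((Finset.univ.image (Sum.inr : Fin l → Vt)) : Set Vt)
      = Set.range (Sum.inr : Fin l → Vt) := by
    rw [Finset.coe_image, Finset.coe_univ, Set.image_univ]
  have h1 : ZqWinFrom (windmillI η 1 l) 0
      ((∅ : Set Vt) ∪ ↑(Finset.univ.image (Sum.inr : Fin l → Vt))) 0 := by
    rwa [Set.empty_union, hs]
  have h2 := zq_fill_finset (Finset.univ.image (Sum.inr : Fin l → Vt)) ∅ 0 h1
  rwa [Finset.card_image_of_injective _ Sum.inr_injective, Finset.card_univ,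
    Fintype.card_fin, zero_add] at h2

end Stmt12Aux

/-- for `η ≥ 2`, `l ≥ 1`, `Z₀(W'(η,1,l)) = l`, where `Z₀ = Z₊`. -/
theorem stmt12 (η l : ℕ) (hη : 2 ≤ η) (hl : 1 ≤ l) :
    qZeroForcingNumber (windmillI η 1 l) 0 = l ∧
    psdZeroForcingNumber (windmillI η 1 l) = l := by
  constructor
  · -- q-forcing number
    have hmem : l ∈ {t | ZqWinFrom (windmillI η 1 l) 0 ∅ t} := zq_ub hl
    refine le_antisymm (Nat.sInf_le hmem) ?_
    have hsInf := Nat.sInf_mem (⟨l, hmem⟩ : {t | ZqWinFrom (windmillI η 1 l) 0 ∅ t}.Nonempty)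
    have := zq_lb hη hl hsInf
    simpa [Set.ncard_empty, qZeroForcingNumber] using this
  · -- PSD forcing number
    have hmem : l ∈ {n | ∃ S : Set ((Fin η × Fin 1) ⊕ Fin l),
        S.ncard = n ∧ IsPSDForcingSet (windmillI η 1 l) S} :=
      ⟨Set.range Sum.inr, ncard_centers, IsPSDForcingSet_centers hl⟩
    refine le_antisymm (Nat.sInf_le hmem) ?_
    have hsInf := Nat.sInf_mem (⟨l, hmem⟩ : {n | ∃ S : Set ((Fin η × Fin 1) ⊕ Fin l),
        S.ncard = n ∧ IsPSDForcingSet (windmillI η 1 l) S}.Nonempty)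
    obtain ⟨S, hS, hforce⟩ := hsInf
    rw [psdZeroForcingNumber, ← hS]
    exact psd_lb hη hl hforce

end ZqForcing
end
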